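/- Suppose a family of axis-parallel cubes {C_v}_{v∈V} in ℝ³ tiles the rectangular parallelepiped R = [0,√(h⁻¹)] × [0,√(h⁻¹)] × [0,h] (the cubes have pairwise disjoint interiors and union R), C_v has edge length s(v), and for every (t₁,t₂) ∈ [0,√(h⁻¹)]², the set γ_{t₁,t₂} = {v ∈ V : ({(t₁,t₂)} × ℝ) ∩ C_v ≠ ∅} contains the vertex set of a path in G joining B₁ to B̄₁. Then for any metric m : V → [0,∞), h⁻¹ · l_m(B₁,B̄₁) ≤ Σ_{v∈V} m(v)·s(v)². -/

import Mathlib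

open MeasureTheory

noncomputable def gdist {V : Type*} (G : SimpleGraph V) (m : V → ℝ) (A B : Set V) : ℝ :=
  sInf {x : ℝ | ∃ u ∈ A, ∃ v ∈ B, ∃ w : G.Walk u v, x = (w.support.map m).sum}

/-- Averaging inequality: if axis-parallel cubes `C_v` of edge `s v` tile
`R = [0,√h⁻¹]² × [0,h]` and every vertical line through the base meets the cubes of
a walk from `B₁` to `B̄₁`, then `h⁻¹ · l_m(B₁,B̄₁) ≤ ∑ m(v) s(v)²`. -/
theorem stmt10 {V : Type*} [Fintype V] (G : SimpleGraph V)
    (B₁ B₂ : Set V) (h₁ : B₁.Nonempty) (h₂ : B₂.Nonempty)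
    (h : ℝ) (hh : 0 < h) (a : V → (Fin 3 → ℝ)) (s : V → ℝ) (hs : ∀ v, 0 ≤ s v)
    (huni : (⋃ v, Set.Icc (a v) (a v + fun _ => s v))
      = Set.Icc (0 : Fin 3 → ℝ) ![Real.sqrt h⁻¹, Real.sqrt h⁻¹, h])
    (hdisj : ∀ u v : V, u ≠ v →
      Disjoint (interior (Set.Icc (a u) (a u + fun _ => s u)))
        (interior (Set.Icc (a v) (a v + fun _ => s v))))
    (hline : ∀ t₁ ∈ Set.Icc (0 : ℝ) (Real.sqrt h⁻¹), ∀ t₂ ∈ Set.Icc (0 : ℝ) (Real.sqrt h⁻¹),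
      ∃ u ∈ B₁, ∃ w ∈ B₂, ∃ p : G.Walk u w, ∀ x ∈ p.support,
        ∃ q : Fin 3 → ℝ, q 0 = t₁ ∧ q 1 = t₂ ∧ q ∈ Set.Icc (a x) (a x + fun _ => s x))
    (m : V → ℝ) (hm : ∀ v, 0 ≤ m v) :
    h⁻¹ * gdist G m B₁ B₂ ≤ ∑ v, m v * s v ^ 2 := by
  classical
  set r := Real.sqrt h⁻¹ with hrdef
  have hr0 : 0 ≤ r := Real.sqrt_nonneg _
  have hrr : r * r = h⁻¹ := Real.mul_self_sqrt (by positivity)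
  set T : Set (ℝ × ℝ) := Set.Icc 0 r ×ˢ Set.Icc 0 r with hTdef
  set P : V → Set (ℝ × ℝ) :=
    fun v => Set.Icc (a v 0) (a v 0 + s v) ×ˢ Set.Icc (a v 1) (a v 1 + s v) with hPdef
  have hPm : ∀ v, MeasurableSet (P v) := fun v => measurableSet_Icc.prod measurableSet_Icc
  set L := gdist G m B₁ B₂ with hLdef
  have key : ∀ t ∈ T, L ≤ ∑ v, Set.indicator (P v) (fun _ => m v) t := by
    rintro ⟨t₁, t₂⟩ ht
    obtain ⟨ht1, ht2⟩ := ht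
    obtain ⟨u, hu, w, hw, p, hp⟩ := hline t₁ ht1 t₂ ht2
    have hsub : ∀ x ∈ p.bypass.support, (t₁, t₂) ∈ P x := by
      intro x hx
      obtain ⟨q, hq0, hq1, hql, hqu⟩ := hp x (p.support_bypass_subset hx)
      refine ⟨⟨?_, ?_⟩, ⟨?_, ?_⟩⟩
      · simpa [hq0] using hql 0
      · simpa [hq0] using hqu 0
      · simpa [hq1] using hql 1
      · simpa [hq1] using hqu 1
    have h1 : L ≤ (p.bypass.support.map m).sum := by
      show sInf _ ≤ _
      apply csInf_le
      · refine ⟨0, ?_⟩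
        rintro x ⟨u', _, v', _, w', rfl⟩
        apply List.sum_nonneg
        intro b hb
        obtain ⟨y, _, rfl⟩ := List.mem_map.1 hb
        exact hm y
      · exact ⟨u, hu, w, hw, p.bypass, rfl⟩
    have hnd : p.bypass.support.Nodup := p.bypass_isPath.support_nodup
    calc L ≤ (p.bypass.support.map m).sum := h1
      _ = ∑ v ∈ p.bypass.support.toFinset, m v := (List.sum_toFinset m hnd).symm
      _ = ∑ v ∈ p.bypass.support.toFinset,
            Set.indicator (P v) (fun _ => m v) (t₁, t₂) := by
          refine Finset.sum_congr rfl fun x hx => ?_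
          rw [Set.indicator_of_mem (hsub x (List.mem_toFinset.1 hx))]
      _ ≤ ∑ v, Set.indicator (P v) (fun _ => m v) (t₁, t₂) :=
          Finset.sum_le_sum_of_subset_of_nonneg (Finset.subset_univ _)
            (fun v _ _ => Set.indicator_nonneg (fun _ _ => hm v) _)
  have hTm : MeasurableSet T := measurableSet_Icc.prod measurableSet_Icc
  have hTc : IsCompact T := isCompact_Icc.prod isCompact_Icc
  have hTfin : volume T < ⊤ := hTc.measure_lt_top
  have hgint : ∀ v : V, IntegrableOn (Set.indicator (P v) (fun _ => m v)) T := by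
    intro v
    exact (integrableOn_const hTfin.ne).indicator (hPm v)
  have hsumint : IntegrableOn (fun t => ∑ v, Set.indicator (P v) (fun _ => m v) t) T :=
    integrable_finset_sum _ (fun v _ => hgint v)
  have hLint : IntegrableOn (fun _ => L) T := integrableOn_const hTfin.ne
  have hmono : ∫ t in T, L ≤ ∫ t in T, ∑ v, Set.indicator (P v) (fun _ => m v) t :=
    setIntegral_mono_on hLint hsumint hTm key
  have hvolT : (volume T).toReal = h⁻¹ := by
    rw [hTdef, Measure.volume_eq_prod, Measure.prod_prod, Real.volume_Icc]
    simp only [sub_zero]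
    rw [← ENNReal.ofReal_mul hr0, hrr, ENNReal.toReal_ofReal (by positivity)]
  have hleft : ∫ t in T, L = h⁻¹ * L := by
    rw [setIntegral_const, measureReal_def, hvolT, smul_eq_mul]
  have hright : ∫ t in T, ∑ v, Set.indicator (P v) (fun _ => m v) t ≤ ∑ v, m v * s v ^ 2 := by
    rw [integral_finset_sum _ (fun v _ => hgint v)]
    apply Finset.sum_le_sum
    intro v _
    rw [setIntegral_indicator (hPm v), setIntegral_const, measureReal_def, smul_eq_mul]
    have h2 : volume (P v) = ENNReal.ofReal (s v) * ENNReal.ofReal (s v) := by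
      rw [hPdef]
      simp only
      rw [Measure.volume_eq_prod, Measure.prod_prod, Real.volume_Icc, Real.volume_Icc]
      ring_nf
    have hPvol : (volume (T ∩ P v)).toReal ≤ s v * s v := by
      have h1 : volume (T ∩ P v) ≤ volume (P v) := measure_mono Set.inter_subset_right
      have h3 : (volume (P v)).toReal = s v * s v := by
        rw [h2, ← ENNReal.ofReal_mul (hs v),
          ENNReal.toReal_ofReal (mul_nonneg (hs v) (hs v))]
      calc (volume (T ∩ P v)).toReal ≤ (volume (P v)).toReal := by
            apply ENNReal.toReal_mono _ h1
            rw [h2]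
            exact ENNReal.mul_ne_top ENNReal.ofReal_ne_top ENNReal.ofReal_ne_top
        _ = s v * s v := h3
    calc (volume (T ∩ P v)).toReal * m v ≤ (s v * s v) * m v :=
          mul_le_mul_of_nonneg_right hPvol (hm v)
      _ = m v * s v ^ 2 := by ring
  linarith [hmono, hleft ▸ hmono]
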